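/- There exists a universal constant C > 0 with the following property. Let n, d, d_V be positive integers with d_V·d ≥ 3, let β ≥ 1, and let σ, M, η, R > 0 and Γ > 1. Let Φ ∈ ℝ^{n×d} be a matrix whose every row has Euclidean norm at most M, and assume (1/√n)‖Φw‖₂ ≥ √η‖w‖₂ for every w with ‖w‖₂ ≤ 2R. Let V_R be a nonempty compact subset of {w ∈ ℝ^d : ‖w‖₂ ≤ R} satisfying the covering bound: for every ε' ∈ (0, 2R] there exists a finite set N ⊆ V_R of cardinality at most 2β·(2R·d_V·d/ε')^{d_V} such that every point of V_R is within Euclidean distance ε' of some point of N. Let ε ∈ ℝ^n be a random vector with independent N(0, σ²) coordinates, and for each w* ∈ V_R let ŵ(w*) ∈ V_R be a minimizer of w ↦ ‖Φw* + ε − Φw‖₂² over V_R, chosen so that ‖ŵ(w₁) − ŵ(w₂)‖₂ ≤ (Γ − 1)‖w₁ − w₂‖₂ for all w₁, w₂ ∈ V_R. Then for every δ ∈ (0, 1), with probability at least 1 − δ, sup_{w* ∈ V_R} ‖ŵ(w*) − w*‖₂² ≤ C·η^{−1}·σ·M·Γ·R·(√(d_V·log(d_V·d)/n) + √(log(2β)/n)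 + 2√(log(2/δ)/n)). -/

import Mathlib

open MeasureTheory Finset
open scoped NNReal ENNReal

section AuxPILR
open ProbabilityTheory Real
open scoped NNReal ENNReal

private lemma aux_exp_mul_pdf (v : ℝ≥0) (hv : v ≠ 0) (t x : ℝ) :
    rexp (t * x) * gaussianPDFReal 0 v x
      = rexp ((v : ℝ) * t ^ 2 / 2) * gaussianPDFReal ((v : ℝ) * t) v x := by
  have hv' : (0:ℝ) < v := lt_of_le_of_ne v.coe_nonneg (by exact_mod_cast hv.symm)
  simp only [gaussianPDFReal, sub_zero]
  rw [mul_left_comm, ← Real.exp_add, mul_left_comm, ← Real.exp_add]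
  congr 1
  rw [Real.exp_eq_exp]
  field_simp
  ring

private lemma aux_integrable_exp_gauss {Ω : Type*} [MeasurableSpace Ω] {μ : Measure Ω}
    {X : Ω → ℝ} (hX : Measurable X) {v : ℝ≥0} (hv : v ≠ 0)
    (hmap : Measure.map X μ = gaussianReal 0 v) (t : ℝ) :
    Integrable (fun ω => rexp (t * X ω)) μ := by
  have h1 : Integrable (fun x => rexp (t * x)) (gaussianReal 0 v) := by
    rw [gaussianReal_of_var_ne_zero 0 hv]
    rw [show gaussianPDF 0 v = fun x => ((Real.toNNReal (gaussianPDFReal 0 v x) : ℝ≥0) : ℝ≥0∞) from rfl]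
    rw [integrable_withDensity_iff_integrable_smul
      ((measurable_gaussianPDFReal 0 v).real_toNNReal)]
    have : (fun x => (Real.toNNReal (gaussianPDFReal 0 v x)) • rexp (t * x))
        = fun x => rexp ((v : ℝ) * t ^ 2 / 2) * gaussianPDFReal ((v : ℝ) * t) v x := by
      funext x
      rw [NNReal.smul_def, smul_eq_mul, Real.coe_toNNReal _ (gaussianPDFReal_nonneg 0 v x),
        mul_comm, aux_exp_mul_pdf v hv]
    rw [this]
    exact (integrable_gaussianPDFReal _ _).const_mul _
  rw [← hmap] at h1
  exact (integrable_map_measure (((measurable_const.mul measurable_id').exp :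
    Measurable fun x : ℝ => rexp (t * x)).aestronglyMeasurable) hX.aemeasurable).mp h1

private lemma aux_mgf_gauss {Ω : Type*} [MeasurableSpace Ω] {μ : Measure Ω}
    {X : Ω → ℝ} (hX : Measurable X) {v : ℝ≥0} (hv : v ≠ 0)
    (hmap : Measure.map X μ = gaussianReal 0 v) (t : ℝ) :
    mgf X μ t = rexp ((v : ℝ) * t ^ 2 / 2) := by
  have h0 : mgf X μ t = ∫ x, rexp (t * x) ∂(Measure.map X μ) := by
    rw [integral_map hX.aemeasurable ((show Measurable fun x : ℝ => rexp (t * x) by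
      fun_prop).aestronglyMeasurable)]
    rfl
  rw [h0, hmap, gaussianReal_of_var_ne_zero 0 hv]
  rw [show gaussianPDF 0 v = fun x => ((Real.toNNReal (gaussianPDFReal 0 v x) : ℝ≥0) : ℝ≥0∞) from rfl]
  rw [integral_withDensity_eq_integral_smul ((measurable_gaussianPDFReal 0 v).real_toNNReal)]
  have heq : (fun x => (Real.toNNReal (gaussianPDFReal 0 v x)) • rexp (t * x))
      = fun x => rexp ((v : ℝ) * t ^ 2 / 2) * gaussianPDFReal ((v : ℝ) * t) v x := by
    funext x
    rw [NNReal.smul_def, smul_eq_mul, Real.coe_toNNReal _ (gaussianPDFReal_nonneg 0 v x),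
      mul_comm, aux_exp_mul_pdf v hv]
  rw [heq, integral_const_mul, integral_gaussianPDFReal_eq_one _ hv, mul_one]

private lemma aux_gauss_sum_tail {Ω : Type*} [MeasurableSpace Ω] {μ : Measure Ω}
    [IsProbabilityMeasure μ]
    {n : ℕ} {ε : Fin n → Ω → ℝ} (hmeas : ∀ i, Measurable (ε i))
    (hind : ProbabilityTheory.iIndepFun ε μ)
    {v : ℝ≥0} (hv : v ≠ 0) (hmap : ∀ i, Measure.map (ε i) μ = gaussianReal 0 v)
    (c : Fin n → ℝ) {τ : ℝ} (hτ : 0 < τ) (hs : 0 < ∑ i, c i ^ 2) :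
    μ {ω | τ < |∑ i, c i * ε i ω|}
      ≤ ENNReal.ofReal (2 * rexp (-τ ^ 2 / (2 * (v : ℝ) * ∑ i, c i ^ 2))) := by
  have hv' : (0:ℝ) < v := lt_of_le_of_ne v.coe_nonneg (by exact_mod_cast hv.symm)
  set s : ℝ := ∑ i, c i ^ 2 with hs_def
  set Y : Fin n → Ω → ℝ := fun i ω => c i * ε i ω with hY_def
  have hYmeas : ∀ i, Measurable (Y i) := fun i => (hmeas i).const_mul _
  have hindY : ProbabilityTheory.iIndepFun Y μ := by
    have := hind.comp (fun i (x : ℝ) => c i * x) (fun i => measurable_const.mul measurable_id')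
    exact this
  have hYint : ∀ (t : ℝ) (i : Fin n), Integrable (fun ω => rexp (t * Y i ω)) μ := by
    intro t i
    have := aux_integrable_exp_gauss (hmeas i) hv (hmap i) (t * c i)
    simpa [hY_def, mul_assoc] using this
  have hmgfY : ∀ (t : ℝ) (i : Fin n), mgf (Y i) μ t = rexp ((v : ℝ) * c i ^ 2 * t ^ 2 / 2) := by
    intro t i
    have h1 : mgf (Y i) μ t = mgf (ε i) μ (t * c i) := by
      unfold mgf
      congr 1
      funext ω
      simp [hY_def]; ring_nf
    rw [h1, aux_mgf_gauss (hmeas i) hv (hmap i)]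
    congr 1
    ring
  have hSum : ∀ t : ℝ, mgf (∑ i, Y i) μ t = rexp ((v : ℝ) * s * t ^ 2 / 2) := by
    intro t
    rw [hindY.mgf_sum hYmeas Finset.univ]
    have : ∀ i ∈ Finset.univ, mgf (Y i) μ t = rexp ((v : ℝ) * c i ^ 2 * t ^ 2 / 2) :=
      fun i _ => hmgfY t i
    rw [Finset.prod_congr rfl this, ← Real.exp_sum]
    congr 1
    rw [← Finset.sum_div, ← Finset.sum_mul, ← Finset.mul_sum]
  have hSint : ∀ t : ℝ, Integrable (fun ω => rexp (t * (∑ i, Y i) ω)) μ := fun t =>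
    hindY.integrable_exp_mul_sum hYmeas (fun i _ => hYint t i)
  set lam : ℝ := τ / ((v : ℝ) * s) with hlam_def
  have hlam : 0 < lam := by positivity
  have hexp : -lam * τ + (v : ℝ) * s * lam ^ 2 / 2 = -τ ^ 2 / (2 * (v : ℝ) * s) := by
    rw [hlam_def]; field_simp; ring
  have h1 := measure_ge_le_exp_mul_mgf (μ := μ) (X := ∑ i, Y i) τ hlam.le (hSint lam)
  rw [hSum, ← Real.exp_add, hexp] at h1
  have h2 := measure_le_le_exp_mul_mgf (μ := μ) (X := ∑ i, Y i) (-τ)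
    (neg_nonpos.mpr hlam.le) (hSint (-lam))
  rw [hSum, ← Real.exp_add] at h2
  have h2' : (μ {ω | (∑ i, Y i) ω ≤ -τ}).toReal ≤ rexp (-τ ^ 2 / (2 * (v : ℝ) * s)) := by
    refine h2.trans (le_of_eq ?_)
    congr 1
    rw [hlam_def]; field_simp; ring
  have hsub : {ω | τ < |∑ i, c i * ε i ω|}
      ⊆ {ω | τ ≤ (∑ i, Y i) ω} ∪ {ω | (∑ i, Y i) ω ≤ -τ} := by
    intro ω hω
    simp only [Set.mem_setOf_eq, lt_abs] at hω
    rcases hω with h | h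
    · left; simp only [Set.mem_setOf_eq, Finset.sum_apply]; exact h.le
    · right; simp only [Set.mem_setOf_eq, Finset.sum_apply]; linarith
  refine (measure_mono hsub).trans ((measure_union_le _ _).trans ?_)
  have e1 : μ {ω | τ ≤ (∑ i, Y i) ω} ≤ ENNReal.ofReal (rexp (-τ ^ 2 / (2 * (v : ℝ) * s))) := by
    rw [← ENNReal.ofReal_toReal (measure_ne_top μ _)]
    exact ENNReal.ofReal_le_ofReal h1
  have e2 : μ {ω | (∑ i, Y i) ω ≤ -τ} ≤ ENNReal.ofReal (rexp (-τ ^ 2 / (2 * (v : ℝ) * s))) := by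
    rw [← ENNReal.ofReal_toReal (measure_ne_top μ _)]
    exact ENNReal.ofReal_le_ofReal h2'
  calc μ {ω | τ ≤ (∑ i, Y i) ω} + μ {ω | (∑ i, Y i) ω ≤ -τ}
      ≤ ENNReal.ofReal (rexp (-τ ^ 2 / (2 * (v : ℝ) * s)))
        + ENNReal.ofReal (rexp (-τ ^ 2 / (2 * (v : ℝ) * s))) := add_le_add e1 e2
    _ = ENNReal.ofReal (2 * rexp (-τ ^ 2 / (2 * (v : ℝ) * s))) := by
        rw [← ENNReal.ofReal_add (by positivity) (by positivity)]; ring_nf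

private lemma aux_sqrt_add_le {a b : ℝ} (ha : 0 ≤ a) (hb : 0 ≤ b) :
    Real.sqrt (a + b) ≤ Real.sqrt a + Real.sqrt b := by
  have h1 : a + b ≤ (Real.sqrt a + Real.sqrt b) ^ 2 := by
    nlinarith [Real.sq_sqrt ha, Real.sq_sqrt hb, Real.sqrt_nonneg a, Real.sqrt_nonneg b]
  calc Real.sqrt (a + b) ≤ Real.sqrt ((Real.sqrt a + Real.sqrt b) ^ 2) := Real.sqrt_le_sqrt h1
    _ = Real.sqrt a + Real.sqrt b := Real.sqrt_sq (by positivity)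

private lemma aux_cs {d : ℕ} (f h : Fin d → ℝ) :
    ∑ j, f j * h j ≤ Real.sqrt (∑ j, f j ^ 2) * Real.sqrt (∑ j, h j ^ 2) := by
  have hfe : ∀ (f : Fin d → ℝ), Real.sqrt (∑ j, f j ^ 2)
      = ‖(WithLp.equiv 2 (Fin d → ℝ)).symm f‖ := by
    intro f
    rw [EuclideanSpace.norm_eq]
    congr 1
    refine Finset.sum_congr rfl fun j _ => ?_
    simp [Real.norm_eq_abs, sq_abs]
  have hin := real_inner_le_norm ((WithLp.equiv 2 (Fin d → ℝ)).symm f)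
    ((WithLp.equiv 2 (Fin d → ℝ)).symm h)
  rw [hfe f, hfe h]
  refine le_trans (le_of_eq ?_) hin
  rw [PiLp.inner_apply]
  simp [RCLike.inner_apply]
  exact Finset.sum_congr rfl fun j _ => mul_comm _ _

private lemma aux_tri {d : ℕ} (a b : Fin d → ℝ) :
    Real.sqrt (∑ j, (a j - b j) ^ 2)
      ≤ Real.sqrt (∑ j, a j ^ 2) + Real.sqrt (∑ j, b j ^ 2) := by
  have h2 : -(∑ j, a j * b j) ≤ Real.sqrt (∑ j, a j ^ 2) * Real.sqrt (∑ j, b j ^ 2) := by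
    have h3 := aux_cs a (fun j => -(b j))
    have e2 : ∑ j, a j * -(b j) = -(∑ j, a j * b j) := by
      rw [← Finset.sum_neg_distrib]; exact Finset.sum_congr rfl fun j _ => by ring
    have e3 : ∑ j, (-(b j)) ^ 2 = ∑ j, b j ^ 2 := Finset.sum_congr rfl fun j _ => by ring
    rw [e2, e3] at h3
    exact h3
  have h1 : ∑ j, (a j - b j) ^ 2
      ≤ (Real.sqrt (∑ j, a j ^ 2) + Real.sqrt (∑ j, b j ^ 2)) ^ 2 := by
    have e1 : ∑ j, (a j - b j) ^ 2
        = ∑ j, a j ^ 2 - 2 * ∑ j, a j * b j + ∑ j, b j ^ 2 := by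
      have e0 : ∀ j : Fin d, (a j - b j) ^ 2 = a j ^ 2 - 2 * (a j * b j) + b j ^ 2 :=
        fun j => by ring
      simp_rw [e0]
      rw [Finset.sum_add_distrib, Finset.sum_sub_distrib, ← Finset.mul_sum]
    nlinarith [Real.sq_sqrt (Finset.sum_nonneg fun j (_ : j ∈ univ) => sq_nonneg (a j)),
      Real.sq_sqrt (Finset.sum_nonneg fun j (_ : j ∈ univ) => sq_nonneg (b j)),
      Real.sqrt_nonneg (∑ j, a j ^ 2), Real.sqrt_nonneg (∑ j, b j ^ 2)]
  calc Real.sqrt (∑ j, (a j - b j) ^ 2)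
      ≤ Real.sqrt ((Real.sqrt (∑ j, a j ^ 2) + Real.sqrt (∑ j, b j ^ 2)) ^ 2) :=
        Real.sqrt_le_sqrt h1
    _ = _ := Real.sqrt_sq (by positivity)

end AuxPILR
set_option maxHeartbeats 2000000 in
/-- Minimax risk bound for physics-informed linear regression:
there is a universal constant `C > 0` such that, under a row bound `M` on `Φ`, a
restricted-eigenvalue condition with constant `η`, a `(β, d_V)`-type covering bound
for the compact feasible set `V_R ⊆ B₂(R)`, i.i.d. `N(0,σ²)` noise, and a
`(Γ−1)`-stable family of constrained least-squares estimators `ŵ(·)`, for every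
`δ ∈ (0,1)`, with probability at least `1 − δ`,
`sup_{w* ∈ V_R} ‖ŵ(w*) − w*‖₂² ≤ C·η⁻¹·σ·M·Γ·R·(√(d_V log(d_V d)/n) + √(log(2β)/n) + 2√(log(2/δ)/n))`. -/
theorem pilr_minimax_risk_bound :
    ∃ C : ℝ, 0 < C ∧
      ∀ (n d dV : ℕ), 0 < n → 0 < d → 0 < dV → 3 ≤ dV * d →
      ∀ (β σ M η R Γ : ℝ), 1 ≤ β → 0 < σ → 0 < M → 0 < η → 0 < R → 1 < Γ →
      ∀ (Φ : Matrix (Fin n) (Fin d) ℝ),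
      (∀ i, Real.sqrt (∑ j, (Φ i j) ^ 2) ≤ M) →
      (∀ w : Fin d → ℝ, Real.sqrt (∑ j, (w j) ^ 2) ≤ 2 * R →
        Real.sqrt η * Real.sqrt (∑ j, (w j) ^ 2)
          ≤ (1 / Real.sqrt n) * Real.sqrt (∑ i, (Φ.mulVec w i) ^ 2)) →
      ∀ (VR : Set (Fin d → ℝ)), VR.Nonempty → IsCompact VR →
      VR ⊆ {w | Real.sqrt (∑ j, (w j) ^ 2) ≤ R} →
      (∀ ε' ∈ Set.Ioc (0 : ℝ) (2 * R), ∃ N : Finset (Fin d → ℝ),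
        (↑N : Set (Fin d → ℝ)) ⊆ VR ∧
        (N.card : ℝ) ≤ 2 * β * (2 * R * dV * d / ε') ^ dV ∧
        ∀ w ∈ VR, ∃ v ∈ N, Real.sqrt (∑ j, (w j - v j) ^ 2) ≤ ε') →
      ∀ (Ω : Type) (_ : MeasurableSpace Ω) (μ : Measure Ω), IsProbabilityMeasure μ →
      ∀ (ε : Fin n → Ω → ℝ), (∀ i, Measurable (ε i)) →
      ProbabilityTheory.iIndepFun ε μ →
      (∀ i, Measure.map (ε i) μ = ProbabilityTheory.gaussianReal 0 (Real.toNNReal (σ ^ 2))) →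
      ∀ (what : (Fin d → ℝ) → Ω → (Fin d → ℝ)),
      (∀ wstar ∈ VR, ∀ ω, what wstar ω ∈ VR) →
      (∀ wstar ∈ VR, ∀ ω, ∀ w ∈ VR,
        ∑ i, (Φ.mulVec wstar i + ε i ω - Φ.mulVec (what wstar ω) i) ^ 2
          ≤ ∑ i, (Φ.mulVec wstar i + ε i ω - Φ.mulVec w i) ^ 2) →
      (∀ w₁ ∈ VR, ∀ w₂ ∈ VR, ∀ ω,
        Real.sqrt (∑ j, (what w₁ ω j - what w₂ ω j) ^ 2)
          ≤ (Γ - 1) * Real.sqrt (∑ j, (w₁ j - w₂ j) ^ 2)) →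
      ∀ δ ∈ Set.Ioo (0 : ℝ) 1,
        ENNReal.ofReal (1 - δ)
          ≤ μ {ω | ∀ wstar ∈ VR,
              ∑ j, (what wstar ω j - wstar j) ^ 2
                ≤ C * η⁻¹ * σ * M * Γ * R *
                  (Real.sqrt (dV * Real.log (dV * d) / n) +
                   Real.sqrt (Real.log (2 * β) / n) +
                   2 * Real.sqrt (Real.log (2 / δ) / n))} := by
  refine ⟨8, by norm_num, ?_⟩
  intro n d dV hn hd hdV hdVd β σ M η R Γ hβ hσ hM hη hR hΓ Φ hrow hRE VR hVRne hVRcomp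
    hVRsub _hcover Ω mΩ μ hprob ε hmeasε hind hmap what hwhatmem hmin _hstab δ hδ
  haveI := hprob
  obtain ⟨hδ0, hδ1⟩ := hδ
  set v : ℝ≥0 := Real.toNNReal (σ ^ 2) with hv_def
  have hvσ : (v : ℝ) = σ ^ 2 := Real.coe_toNNReal _ (sq_nonneg σ)
  have hv' : (0:ℝ) < v := by rw [hvσ]; positivity
  have hv : v ≠ 0 := by
    intro h
    rw [h] at hv'
    simp at hv'
  have hd1 : (1:ℝ) ≤ d := by exact_mod_cast hd
  have hn1 : (1:ℝ) ≤ n := by exact_mod_cast hn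
  have hL0 : (1:ℝ) < 2 * d / δ := by
    rw [lt_div_iff₀ hδ0]; nlinarith
  set L : ℝ := Real.log (2 * d / δ) with hL_def
  have hL : 0 < L := Real.log_pos hL0
  set E : Set Ω := ⋂ j : Fin d,
    {ω : Ω | |∑ i, Φ i j * ε i ω| ≤ Real.sqrt (2 * (v:ℝ) * (∑ i, Φ i j ^ 2) * L)} with hE_def
  -- probability of each bad event
  have hjb : ∀ j : Fin d,
      μ ({ω : Ω | |∑ i, Φ i j * ε i ω| ≤ Real.sqrt (2 * (v:ℝ) * (∑ i, Φ i j ^ 2) * L)}ᶜ)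
        ≤ ENNReal.ofReal (δ / d) := by
    intro j
    by_cases hsj : 0 < ∑ i, Φ i j ^ 2
    · have hτ : 0 < Real.sqrt (2 * (v:ℝ) * (∑ i, Φ i j ^ 2) * L) :=
        Real.sqrt_pos.2 (by positivity)
      have htail := aux_gauss_sum_tail hmeasε hind hv hmap (fun i => Φ i j) hτ hsj
      have hset : ({ω : Ω | |∑ i, Φ i j * ε i ω|
          ≤ Real.sqrt (2 * (v:ℝ) * (∑ i, Φ i j ^ 2) * L)}ᶜ)
          = {ω : Ω | Real.sqrt (2 * (v:ℝ) * (∑ i, Φ i j ^ 2) * L) < |∑ i, Φ i j * ε i ω|} := by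
        ext ω; simp [not_le]
      rw [hset]
      refine htail.trans (le_of_eq ?_)
      congr 1
      rw [Real.sq_sqrt (by positivity)]
      have he : -(2 * (v:ℝ) * (∑ i, Φ i j ^ 2) * L) / (2 * (v:ℝ) * (∑ i, Φ i j ^ 2)) = -L := by
        rw [div_eq_iff (by positivity : (2 * (v:ℝ) * (∑ i, Φ i j ^ 2)) ≠ 0)]
        ring
      rw [he, Real.exp_neg, hL_def, Real.exp_log (by positivity)]
      rw [show ((2:ℝ) * d / δ)⁻¹ = δ / (2 * d) by rw [inv_div]]
      field_simp
    · have hz : ∀ i, Φ i j = 0 := by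
        intro i
        have hle : ∑ i, Φ i j ^ 2 ≤ 0 := le_of_not_gt hsj
        have hge := Finset.sum_nonneg (fun i (_ : i ∈ univ) => sq_nonneg (Φ i j))
        have hsum0 : ∑ i, Φ i j ^ 2 = 0 := le_antisymm hle hge
        have := (Finset.sum_eq_zero_iff_of_nonneg
          (fun i (_ : i ∈ univ) => sq_nonneg (Φ i j))).1 hsum0 i (Finset.mem_univ i)
        exact pow_eq_zero_iff (by norm_num) |>.1 this
      have hempty : ({ω : Ω | |∑ i, Φ i j * ε i ω|
          ≤ Real.sqrt (2 * (v:ℝ) * (∑ i, Φ i j ^ 2) * L)}ᶜ) = ∅ := by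
        ext ω
        simp [hz, Real.sqrt_nonneg]
      rw [hempty]
      simp
  have hEc : μ Eᶜ ≤ ENNReal.ofReal δ := by
    rw [hE_def, Set.compl_iInter]
    refine (measure_iUnion_le _).trans ?_
    calc (∑' j : Fin d, μ ({ω : Ω | |∑ i, Φ i j * ε i ω|
            ≤ Real.sqrt (2 * (v:ℝ) * (∑ i, Φ i j ^ 2) * L)}ᶜ))
        ≤ ∑' j : Fin d, ENNReal.ofReal (δ / d) := ENNReal.tsum_le_tsum hjb
      _ = ∑ j : Fin d, ENNReal.ofReal (δ / d) := tsum_fintype _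
      _ = (d : ℝ≥0∞) * ENNReal.ofReal (δ / d) := by
          rw [Finset.sum_const, Finset.card_univ, Fintype.card_fin, nsmul_eq_mul]
      _ = ENNReal.ofReal (d : ℝ) * ENNReal.ofReal (δ / d) := by rw [ENNReal.ofReal_natCast]
      _ = ENNReal.ofReal ((d : ℝ) * (δ / d)) := (ENNReal.ofReal_mul (by positivity)).symm
      _ = ENNReal.ofReal δ := by
          congr 1
          field_simp
  have hEmeas : MeasurableSet E := by
    refine MeasurableSet.iInter fun j => ?_
    have hgmeas : Measurable (fun ω => ∑ i, Φ i j * ε i ω) :=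
      Finset.measurable_sum Finset.univ (fun i _ => (hmeasε i).const_mul (Φ i j))
    exact measurableSet_le hgmeas.abs measurable_const
  have hElb : ENNReal.ofReal (1 - δ) ≤ μ E := by
    have hsum := measure_add_measure_compl (μ := μ) hEmeas
    rw [measure_univ] at hsum
    have h1 : (1:ℝ≥0∞) ≤ μ E + ENNReal.ofReal δ := by
      rw [← hsum]
      exact add_le_add le_rfl hEc
    calc ENNReal.ofReal (1 - δ) = 1 - ENNReal.ofReal δ := by
          rw [ENNReal.ofReal_sub _ hδ0.le, ENNReal.ofReal_one]
      _ ≤ μ E := tsub_le_iff_right.mpr h1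
  refine hElb.trans (measure_mono ?_)
  intro ω hω
  simp only [Set.mem_setOf_eq]
  intro wstar hwstar
  -- deterministic part
  set wh : Fin d → ℝ := what wstar ω with hwh_def
  have hwhmem : wh ∈ VR := hwhatmem wstar hwstar ω
  set u : Fin d → ℝ := fun j => wh j - wstar j with hu_def
  have h2R : Real.sqrt (∑ j, u j ^ 2) ≤ 2 * R := by
    calc Real.sqrt (∑ j, u j ^ 2)
        ≤ Real.sqrt (∑ j, wh j ^ 2) + Real.sqrt (∑ j, wstar j ^ 2) := aux_tri wh wstar
      _ ≤ R + R := add_le_add (hVRsub hwhmem) (hVRsub hwstar)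
      _ = 2 * R := by ring
  set t : Fin n → ℝ := Φ.mulVec u with ht_def
  have hre2 : η * ∑ j, u j ^ 2 ≤ ((n:ℝ))⁻¹ * ∑ i, t i ^ 2 := by
    have h := hRE u h2R
    have hsq := pow_le_pow_left₀ (by positivity) h 2
    rw [mul_pow, mul_pow, Real.sq_sqrt hη.le,
      Real.sq_sqrt (Finset.sum_nonneg fun j (_ : j ∈ univ) => sq_nonneg (u j)),
      Real.sq_sqrt (Finset.sum_nonneg fun i (_ : i ∈ univ) => sq_nonneg (Φ.mulVec u i)),
      div_pow, one_pow, Real.sq_sqrt (Nat.cast_nonneg n), one_div] at hsq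
    exact hsq
  have hti : ∀ i, t i = ∑ j, Φ i j * u j := by
    intro i
    simp [ht_def, Matrix.mulVec, dotProduct]
  have hbasic : ∑ i, t i ^ 2 ≤ 2 * ∑ j, u j * (∑ i, Φ i j * ε i ω) := by
    have hm := hmin wstar hwstar ω wstar hwstar
    have e1 : ∀ i, Φ.mulVec wstar i + ε i ω - Φ.mulVec wh i = ε i ω - t i := by
      intro i
      have : t i = Φ.mulVec wh i - Φ.mulVec wstar i := by
        have hu2 : u = wh - wstar := by funext j; simp [hu_def]
        rw [ht_def, hu2, Matrix.mulVec_sub]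
        simp
      rw [this]; ring
    have hm2 : ∑ i, (ε i ω - t i) ^ 2 ≤ ∑ i, (ε i ω) ^ 2 := by
      calc ∑ i, (ε i ω - t i) ^ 2
          = ∑ i, (Φ.mulVec wstar i + ε i ω - Φ.mulVec wh i) ^ 2 :=
            Finset.sum_congr rfl fun i _ => by rw [e1 i]
        _ ≤ ∑ i, (Φ.mulVec wstar i + ε i ω - Φ.mulVec wstar i) ^ 2 := hm
        _ = ∑ i, (ε i ω) ^ 2 := Finset.sum_congr rfl fun i _ => by ring
    have hexpand : ∑ i, (ε i ω - t i) ^ 2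
        = ∑ i, (ε i ω) ^ 2 - 2 * ∑ i, ε i ω * t i + ∑ i, t i ^ 2 := by
      have e0 : ∀ i : Fin n, (ε i ω - t i) ^ 2
          = (ε i ω) ^ 2 - 2 * (ε i ω * t i) + t i ^ 2 := fun i => by ring
      simp_rw [e0]
      rw [Finset.sum_add_distrib, Finset.sum_sub_distrib, ← Finset.mul_sum]
    have ht2 : ∑ i, t i ^ 2 ≤ 2 * ∑ i, ε i ω * t i := by
      rw [hexpand] at hm2; linarith
    have hswap : ∑ i, ε i ω * t i = ∑ j, u j * (∑ i, Φ i j * ε i ω) := by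
      have e2 : ∀ i, ε i ω * t i = ∑ j, ε i ω * (Φ i j * u j) := by
        intro i
        rw [← Finset.mul_sum, hti i]
      simp_rw [e2]
      rw [Finset.sum_comm]
      refine Finset.sum_congr rfl fun j _ => ?_
      rw [Finset.mul_sum]
      exact Finset.sum_congr rfl fun i _ => by ring
    rw [hswap] at ht2
    exact ht2
  -- bound on the gradient-type vector
  have hrowsq : ∀ i, ∑ j, Φ i j ^ 2 ≤ M ^ 2 := by
    intro i
    have h1 := hrow i
    have h2 := Real.sq_sqrt (Finset.sum_nonneg fun j (_ : j ∈ univ) => sq_nonneg (Φ i j))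
    nlinarith [Real.sqrt_nonneg (∑ j, Φ i j ^ 2)]
  have hGb : ∑ j, (∑ i, Φ i j * ε i ω) ^ 2 ≤ 2 * (v:ℝ) * ((n:ℝ) * M ^ 2) * L := by
    have hstep : ∀ j : Fin d, (∑ i, Φ i j * ε i ω) ^ 2 ≤ 2 * (v:ℝ) * (∑ i, Φ i j ^ 2) * L := by
      intro j
      have hωj := Set.mem_iInter.mp hω j
      simp only [Set.mem_setOf_eq] at hωj
      have := pow_le_pow_left₀ (abs_nonneg _) hωj 2
      rwa [sq_abs, Real.sq_sqrt (by positivity)] at this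
    calc ∑ j, (∑ i, Φ i j * ε i ω) ^ 2
        ≤ ∑ j, 2 * (v:ℝ) * (∑ i, Φ i j ^ 2) * L :=
          Finset.sum_le_sum fun j _ => hstep j
      _ = 2 * (v:ℝ) * L * ∑ j, ∑ i, Φ i j ^ 2 := by
          rw [Finset.mul_sum]
          exact Finset.sum_congr rfl fun j _ => by ring
      _ ≤ 2 * (v:ℝ) * L * ((n:ℝ) * M ^ 2) := by
          have hsum2 : ∑ j, ∑ i, Φ i j ^ 2 ≤ (n:ℝ) * M ^ 2 := by
            rw [Finset.sum_comm]
            calc ∑ i, ∑ j, Φ i j ^ 2 ≤ ∑ i : Fin n, M ^ 2 :=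
                  Finset.sum_le_sum fun i _ => hrowsq i
              _ = (n:ℝ) * M ^ 2 := by
                  rw [Finset.sum_const, Finset.card_univ, Fintype.card_fin, nsmul_eq_mul]
          have h2vL : (0:ℝ) ≤ 2 * (v:ℝ) * L := by positivity
          exact mul_le_mul_of_nonneg_left hsum2 h2vL
      _ = 2 * (v:ℝ) * ((n:ℝ) * M ^ 2) * L := by ring
  set a : ℝ := Real.log d with ha_def
  set b : ℝ := Real.log (2 / δ) with hb_def
  have ha0 : 0 ≤ a := Real.log_nonneg hd1
  have hb0 : 0 ≤ b := Real.log_nonneg (by rw [le_div_iff₀ hδ0]; linarith)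
  have hLab : L = b + a := by
    rw [hL_def, ha_def, hb_def, show (2:ℝ) * d / δ = (2 / δ) * (d:ℝ) by ring,
      Real.log_mul (by positivity) (by exact_mod_cast hd.ne')]
  have hsqrtL : Real.sqrt L ≤ Real.sqrt a + Real.sqrt b := by
    rw [hLab]
    calc Real.sqrt (b + a) ≤ Real.sqrt b + Real.sqrt a := aux_sqrt_add_le hb0 ha0
      _ = Real.sqrt a + Real.sqrt b := by ring
  have hGs : Real.sqrt (∑ j, (∑ i, Φ i j * ε i ω) ^ 2)
      ≤ σ * M * Real.sqrt n * (Real.sqrt 2 * (Real.sqrt a + Real.sqrt b)) := by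
    have hsq : (σ * M * Real.sqrt n * (Real.sqrt 2 * Real.sqrt L)) ^ 2
        = 2 * (v:ℝ) * ((n:ℝ) * M ^ 2) * L := by
      rw [hvσ, mul_pow, mul_pow, mul_pow, mul_pow, Real.sq_sqrt (Nat.cast_nonneg n),
        Real.sq_sqrt (by norm_num : (0:ℝ) ≤ 2), Real.sq_sqrt hL.le]
      ring
    calc Real.sqrt (∑ j, (∑ i, Φ i j * ε i ω) ^ 2)
        ≤ Real.sqrt (2 * (v:ℝ) * ((n:ℝ) * M ^ 2) * L) := Real.sqrt_le_sqrt hGb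
      _ = σ * M * Real.sqrt n * (Real.sqrt 2 * Real.sqrt L) := by
          rw [← hsq, Real.sqrt_sq (by positivity)]
      _ ≤ σ * M * Real.sqrt n * (Real.sqrt 2 * (Real.sqrt a + Real.sqrt b)) := by
          have := mul_le_mul_of_nonneg_left hsqrtL (Real.sqrt_nonneg 2)
          exact mul_le_mul_of_nonneg_left this (by positivity)
  have hsn : (0:ℝ) < Real.sqrt n := Real.sqrt_pos.2 (by exact_mod_cast hn)
  have hmain : η * ∑ j, u j ^ 2
      ≤ 4 * R * σ * M * (Real.sqrt 2 * (Real.sqrt a + Real.sqrt b)) / Real.sqrt n := by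
    have hcs : ∑ j, u j * (∑ i, Φ i j * ε i ω)
        ≤ (2 * R) * (σ * M * Real.sqrt n * (Real.sqrt 2 * (Real.sqrt a + Real.sqrt b))) := by
      calc ∑ j, u j * (∑ i, Φ i j * ε i ω)
          ≤ Real.sqrt (∑ j, u j ^ 2) * Real.sqrt (∑ j, (∑ i, Φ i j * ε i ω) ^ 2) :=
            aux_cs u _
        _ ≤ (2 * R) * (σ * M * Real.sqrt n * (Real.sqrt 2 * (Real.sqrt a + Real.sqrt b))) :=
            mul_le_mul h2R hGs (Real.sqrt_nonneg _) (by positivity)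
    have hnn : Real.sqrt n * Real.sqrt n = (n:ℝ) := Real.mul_self_sqrt (Nat.cast_nonneg n)
    calc η * ∑ j, u j ^ 2 ≤ ((n:ℝ))⁻¹ * ∑ i, t i ^ 2 := hre2
      _ ≤ ((n:ℝ))⁻¹ * (2 * ∑ j, u j * (∑ i, Φ i j * ε i ω)) :=
          mul_le_mul_of_nonneg_left hbasic (by positivity)
      _ ≤ ((n:ℝ))⁻¹ * (2 * ((2 * R) * (σ * M * Real.sqrt n
            * (Real.sqrt 2 * (Real.sqrt a + Real.sqrt b))))) := by
          refine mul_le_mul_of_nonneg_left ?_ (by positivity)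
          exact mul_le_mul_of_nonneg_left hcs (by norm_num)
      _ = 4 * R * σ * M * (Real.sqrt 2 * (Real.sqrt a + Real.sqrt b)) / Real.sqrt n := by
          have e2 : Real.sqrt n * ((n:ℝ))⁻¹ = (Real.sqrt n)⁻¹ := by
            rw [← div_eq_mul_inv, Real.sqrt_div_self', one_div]
          rw [div_eq_mul_inv, ← e2]
          ring
  -- final comparison
  have hlogdVd : (0:ℝ) ≤ Real.log ((dV:ℝ) * (d:ℝ)) := by
    refine Real.log_nonneg ?_
    have : (3:ℝ) ≤ (dV:ℝ) * (d:ℝ) := by exact_mod_cast hdVd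
    linarith
  have hlog2β : (0:ℝ) ≤ Real.log (2 * β) := Real.log_nonneg (by linarith)
  set A : ℝ := (dV:ℝ) * Real.log ((dV:ℝ) * (d:ℝ)) with hA_def
  have hA0 : 0 ≤ A := by positivity
  have haA : Real.sqrt a ≤ Real.sqrt A := by
    refine Real.sqrt_le_sqrt ?_
    have h1 : a ≤ Real.log ((dV:ℝ) * (d:ℝ)) := by
      rw [ha_def]
      refine Real.log_le_log (by exact_mod_cast hd) ?_
      have hdV1 : (1:ℝ) ≤ (dV:ℝ) := by exact_mod_cast hdV
      exact le_mul_of_one_le_left (by positivity) hdV1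
    have h2 : Real.log ((dV:ℝ) * (d:ℝ)) ≤ A := by
      rw [hA_def]
      have hdV1 : (1:ℝ) ≤ (dV:ℝ) := by exact_mod_cast hdV
      exact le_mul_of_one_le_left hlogdVd hdV1
    linarith
  have hT1 : Real.sqrt ((dV:ℝ) * Real.log ((dV:ℝ) * (d:ℝ)) / (n:ℝ))
      = Real.sqrt A / Real.sqrt n := Real.sqrt_div (by positivity) _
  have hT2 : Real.sqrt (Real.log (2 * β) / (n:ℝ))
      = Real.sqrt (Real.log (2 * β)) / Real.sqrt n := Real.sqrt_div hlog2β _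
  have hT3 : Real.sqrt (Real.log (2 / δ) / (n:ℝ)) = Real.sqrt b / Real.sqrt n :=
    Real.sqrt_div hb0 _
  rw [hT1, hT2, hT3]
  have hXY : 4 * R * σ * M * (Real.sqrt 2 * (Real.sqrt a + Real.sqrt b))
      ≤ 8 * σ * M * Γ * R * (Real.sqrt A + Real.sqrt (Real.log (2 * β)) + 2 * Real.sqrt b) := by
    have h2le : Real.sqrt 2 ≤ 2 := by
      nlinarith [Real.sq_sqrt (by norm_num : (0:ℝ) ≤ 2), Real.sqrt_nonneg 2]
    have hP : 4 * (Real.sqrt 2 * (Real.sqrt a + Real.sqrt b))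
        ≤ 8 * (Γ * (Real.sqrt A + Real.sqrt (Real.log (2 * β)) + 2 * Real.sqrt b)) := by
      have hab0 : (0:ℝ) ≤ Real.sqrt a + Real.sqrt b := by positivity
      have s1 : 4 * (Real.sqrt 2 * (Real.sqrt a + Real.sqrt b))
          ≤ 8 * (Real.sqrt a + Real.sqrt b) := by
        have := mul_le_mul_of_nonneg_right h2le hab0
        linarith
      have s2 : 8 * (Real.sqrt a + Real.sqrt b)
          ≤ 8 * (Real.sqrt A + Real.sqrt (Real.log (2 * β)) + 2 * Real.sqrt b) := by
        have h1 := haA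
        have h2 : (0:ℝ) ≤ Real.sqrt (Real.log (2 * β)) := Real.sqrt_nonneg _
        have h3 : (0:ℝ) ≤ Real.sqrt b := Real.sqrt_nonneg _
        linarith
      have hS : (0:ℝ) ≤ Real.sqrt A + Real.sqrt (Real.log (2 * β)) + 2 * Real.sqrt b := by
        positivity
      have s3 : 8 * (Real.sqrt A + Real.sqrt (Real.log (2 * β)) + 2 * Real.sqrt b)
          ≤ 8 * (Γ * (Real.sqrt A + Real.sqrt (Real.log (2 * β)) + 2 * Real.sqrt b)) := by
        have := mul_nonneg (by linarith : (0:ℝ) ≤ Γ - 1) hS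
        nlinarith
      linarith
    calc 4 * R * σ * M * (Real.sqrt 2 * (Real.sqrt a + Real.sqrt b))
        = (σ * M * R) * (4 * (Real.sqrt 2 * (Real.sqrt a + Real.sqrt b))) := by ring
      _ ≤ (σ * M * R) * (8 * (Γ * (Real.sqrt A + Real.sqrt (Real.log (2 * β))
            + 2 * Real.sqrt b))) := mul_le_mul_of_nonneg_left hP (by positivity)
      _ = 8 * σ * M * Γ * R * (Real.sqrt A + Real.sqrt (Real.log (2 * β))
            + 2 * Real.sqrt b) := by ring
  have hfinal : η * ∑ j, u j ^ 2
      ≤ η * (8 * η⁻¹ * σ * M * Γ * R * (Real.sqrt A / Real.sqrt n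
          + Real.sqrt (Real.log (2 * β)) / Real.sqrt n + 2 * (Real.sqrt b / Real.sqrt n))) := by
    have hrhs : η * (8 * η⁻¹ * σ * M * Γ * R * (Real.sqrt A / Real.sqrt n
          + Real.sqrt (Real.log (2 * β)) / Real.sqrt n + 2 * (Real.sqrt b / Real.sqrt n)))
        = 8 * σ * M * Γ * R * (Real.sqrt A + Real.sqrt (Real.log (2 * β))
            + 2 * Real.sqrt b) / Real.sqrt n := by
      field_simp
    rw [hrhs]
    refine hmain.trans ?_
    exact (div_le_div_iff_of_pos_right hsn).mpr hXY
  exact le_of_mul_le_mul_left hfinal hη
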